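/- Let A ∈ ℝ^{m×d}, let B ∈ ℝ^{d×m} be a Moore–Penrose pseudoinverse of A, and let X be a random vector in ℝ^d with E[‖X‖²] < ∞ and mean μ = E[X]. For z ∈ ℝ^d put K_z := E[(X − z)(X − z)ᵀ]. Then for every z ∈ ℝ^d, Tr((I_d − BA) K_z) − Tr((I_d − BA) K_μ) = (z − μ)ᵀ (I_d − BA) (z − μ) ≥ 0; in particular Tr((I_d − BA) K₀) ≥ Tr((I_d − BA) K_μ) and Tr((I_d − BA) K_{½1}) ≥ Tr((I_d − BA) K_μ), i.e., the mean square errors of the LS and half* attacks are lower-bounded by Tr((I − BA) K_μ)/d. -/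

import Mathlib

open MeasureTheory Matrix

lemma l2_integrable_mul {Ω : Type*} [MeasureSpace Ω] {f g : Ω → ℝ}
    (hf : MemLp f 2) (hg : MemLp g 2) :
    Integrable (fun ω => f ω * g ω) := by
  have h := (((hf.add hg).integrable_sq.sub hf.integrable_sq).sub hg.integrable_sq).div_const 2
  apply h.congr
  filter_upwards with ω
  simp only [Pi.sub_apply, Pi.add_apply]
  ring

/-- For every `z`, `Tr((I − BA)K_z) − Tr((I − BA)K_μ) = (z − μ)ᵀ(I − BA)(z − μ) ≥ 0`;
in particular the traces for `K₀` (`z = 0`) and `K_{½1}` (`z = ½·1`) are lower-bounded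
by `Tr((I − BA)K_μ)`, i.e. the MSEs of the LS and half* attacks are lower-bounded by
`Tr((I − BA)K_μ)/d`. -/
theorem mse_lower_bound_covariance
    {m d : ℕ} (A : Matrix (Fin m) (Fin d) ℝ) (B : Matrix (Fin d) (Fin m) ℝ)
    (h1 : A * B * A = A) (h2 : B * A * B = B)
    (h3 : (A * B)ᵀ = A * B) (h4 : (B * A)ᵀ = B * A)
    {Ω : Type*} [MeasureSpace Ω] [IsProbabilityMeasure (volume : Measure Ω)]
    (X : Ω → Fin d → ℝ) (hXmeas : Measurable X)
    (hL2 : ∀ i, MemLp (fun ω => X ω i) 2)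
    (mu : Fin d → ℝ) (hmu : mu = fun i => ∫ ω, X ω i)
    (K : (Fin d → ℝ) → Matrix (Fin d) (Fin d) ℝ)
    (hKdef : K = fun z => Matrix.of fun i j => ∫ ω, (X ω i - z i) * (X ω j - z j)) :
    (∀ z : Fin d → ℝ,
        Matrix.trace ((1 - B * A) * K z) - Matrix.trace ((1 - B * A) * K mu) =
            (z - mu) ⬝ᵥ ((1 - B * A) *ᵥ (z - mu)) ∧
          0 ≤ (z - mu) ⬝ᵥ ((1 - B * A) *ᵥ (z - mu))) ∧
      Matrix.trace ((1 - B * A) * K mu) ≤ Matrix.trace ((1 - B * A) * K 0) ∧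
      Matrix.trace ((1 - B * A) * K mu) ≤
        Matrix.trace ((1 - B * A) * K (fun _ => 1 / 2)) := by
  set P : Matrix (Fin d) (Fin d) ℝ := 1 - B * A with hP
  -- P is symmetric idempotent
  have hPt : Pᵀ = P := by
    simp [hP, Matrix.transpose_sub, h4]
  have hPP : P * P = P := by
    have : B * A * (B * A) = B * A := by
      rw [← Matrix.mul_assoc, h2]
    simp [hP, sub_mul, mul_sub, this]
  have hL2z : ∀ (z : Fin d → ℝ) i, MemLp (fun ω => X ω i - z i) 2 :=
    fun z i => (hL2 i).sub (memLp_const (z i))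
  have hint : ∀ (z w : Fin d → ℝ) i j,
      Integrable (fun ω => (X ω i - z i) * (X ω j - w j)) :=
    fun z w i j => l2_integrable_mul (hL2z z i) (hL2z w j)
  have hcent : ∀ i, (∫ ω, (X ω i - mu i)) = 0 := by
    intro i
    rw [integral_sub ((hL2 i).integrable one_le_two) (integrable_const _)]
    simp [hmu]
  -- key: K z = K mu + vvᵀ with v = mu - z
  have hKz : ∀ z : Fin d → ℝ, K z = K mu + vecMulVec (mu - z) (mu - z) := by
    intro z
    ext i j
    simp only [hKdef, Matrix.add_apply, Matrix.of_apply, vecMulVec_apply, Pi.sub_apply]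
    have expand : ∀ ω, (X ω i - z i) * (X ω j - z j) =
        (X ω i - mu i) * (X ω j - mu j) + (mu i - z i) * (X ω j - mu j)
          + ((X ω i - mu i) * (mu j - z j) + (mu i - z i) * (mu j - z j)) := by
      intro ω; ring
    rw [integral_congr_ae (Filter.Eventually.of_forall expand)]
    have hI1 := hint mu mu i j
    have hI2 : Integrable (fun ω => (mu i - z i) * (X ω j - mu j)) :=
      (((hL2 j).integrable one_le_two).sub (integrable_const _)).const_mul _
    have hI3 : Integrable (fun ω => (X ω i - mu i) * (mu j - z j)) := by
      exact (((hL2 i).integrable one_le_two).sub (integrable_const (mu i))).mul_const _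
    have hI4 : Integrable (fun _ : Ω => (mu i - z i) * (mu j - z j)) := integrable_const _
    have hI12 : Integrable (fun ω => (X ω i - mu i) * (X ω j - mu j)
        + (mu i - z i) * (X ω j - mu j)) := hI1.add hI2
    have hI34 : Integrable (fun ω => (X ω i - mu i) * (mu j - z j)
        + (mu i - z i) * (mu j - z j)) := hI3.add hI4
    rw [integral_add hI12 hI34, integral_add hI1 hI2,
      integral_add hI3 hI4, integral_const_mul, integral_mul_const, hcent i, hcent j]
    simp
  -- trace of P * vvᵀ is quadratic form
  have htr : ∀ v : Fin d → ℝ, Matrix.trace (P * vecMulVec v v) = v ⬝ᵥ (P *ᵥ v) := by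
    intro v
    simp only [Matrix.trace, Matrix.diag, Matrix.mul_apply, vecMulVec_apply,
      dotProduct, Matrix.mulVec, dotProduct]
    simp only [Finset.mul_sum]
    exact Finset.sum_congr rfl fun i _ => Finset.sum_congr rfl fun j _ => by ring
  have hquad : ∀ v : Fin d → ℝ, 0 ≤ v ⬝ᵥ (P *ᵥ v) := by
    intro v
    have : v ⬝ᵥ (P *ᵥ v) = (P *ᵥ v) ⬝ᵥ (P *ᵥ v) := by
      conv_lhs => rw [← hPP, ← Matrix.mulVec_mulVec, dotProduct_mulVec,
        ← hPt, Matrix.vecMul_transpose, hPt]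
    rw [this]
    exact Finset.sum_nonneg fun i _ => mul_self_nonneg _
  have hmain : ∀ z : Fin d → ℝ,
      Matrix.trace (P * K z) - Matrix.trace (P * K mu) = (z - mu) ⬝ᵥ (P *ᵥ (z - mu)) := by
    intro z
    rw [hKz z, Matrix.mul_add, Matrix.trace_add, htr (mu - z)]
    have hneg : mu - z = -(z - mu) := by ring
    rw [hneg, Matrix.mulVec_neg, neg_dotProduct, dotProduct_neg, neg_neg]
    ring
  refine ⟨fun z => ⟨hmain z, hquad _⟩, ?_, ?_⟩
  · have := hmain 0
    have h0 := hquad (0 - mu)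
    linarith
  · have := hmain (fun _ => 1 / 2)
    have h0 := hquad ((fun _ => 1 / 2) - mu)
    linarith
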